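/- arXiv:2305.10774 — 3 statements merged into one kernel-verified Lean document; each statement's English description precedes it below -/
import Mathlib

section
/- Let f : ℂ → ℂ be continuous on the closed unit disc {z : |z| ≤ 1}, complex-differentiable (holomorphic) on the open unit disc {z : |z| < 1}, non-constant on the open unit disc, satisfy |f(z)| ≤ 1 for all |z| ≤ 1, and satisfy |f(z)| = 1 for all |z| = 1. Then f coincides on the closed unit disc with a finite Blaschke product: there exist n ≥ 1, ρ ∈ ℂ with |ρ| = 1, and ζ_1, …, ζ_n ∈ ℂ with |ζ_i| < 1, such that f(z) = ρ ∏_{i=1}^n (z − ζ_i)/(1 − conj(ζ_i) z) for every z with |z| ≤ 1. -/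
open Complex Metric Set Function Filter Topology

noncomputable def AnalyticAt.order {f : ℂ → ℂ} {w : ℂ} (_h : AnalyticAt ℂ f w) : ℕ∞ :=
  analyticOrderAt f w

lemma AnalyticAt.order_eq_nat_iff {f : ℂ → ℂ} {w : ℂ} (hf : AnalyticAt ℂ f w) {n : ℕ} :
    hf.order = n ↔
      ∃ (g : ℂ → ℂ), AnalyticAt ℂ g w ∧ g w ≠ 0 ∧ ∀ᶠ z in 𝓝 w, f z = (z - w) ^ n • g z :=
  hf.analyticOrderAt_eq_natCast

lemma AnalyticAt.order_eq_top_iff {f : ℂ → ℂ} {w : ℂ} (hf : AnalyticAt ℂ f w) :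
    hf.order = ⊤ ↔ ∀ᶠ z in 𝓝 w, f z = 0 :=
  analyticOrderAt_eq_top

open scoped Classical in
/-- Order of vanishing as a bare natural number. -/
noncomputable def ordN (f : ℂ → ℂ) (w : ℂ) : ℕ :=
  if h : AnalyticAt ℂ f w then h.order.toNat else 0

lemma ordN_eq {f : ℂ → ℂ} {w : ℂ} (h : AnalyticAt ℂ f w) : ordN f w = h.order.toNat := by
  unfold ordN; rw [dif_pos h]

lemma order_mul_unit {u d : ℂ → ℂ} {w : ℂ} {n : ℕ}
    (hu : AnalyticAt ℂ u w) (hd : AnalyticAt ℂ d w) (hu0 : u w ≠ 0)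
    (hn : hd.order = n) :
    ∃ h : AnalyticAt ℂ (fun z => u z * d z) w, h.order = n := by
  have hm : AnalyticAt ℂ (fun z => u z * d z) w := hu.mul hd
  refine ⟨hm, ?_⟩
  rw [hd.order_eq_nat_iff] at hn
  obtain ⟨g, hg, hg0, hfg⟩ := hn
  rw [hm.order_eq_nat_iff]
  refine ⟨fun z => u z * g z, hu.mul hg, mul_ne_zero hu0 hg0, ?_⟩
  filter_upwards [hfg] with z hz
  simp only [hz, smul_eq_mul]; ring

lemma order_sub_mul {d : ℂ → ℂ} {w : ℂ} {n : ℕ}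
    (hd : AnalyticAt ℂ d w) (hn : hd.order = n) :
    ∃ h : AnalyticAt ℂ (fun z => (z - w) * d z) w, h.order = (n + 1 : ℕ) := by
  have hm : AnalyticAt ℂ (fun z => (z - w) * d z) w :=
    ((analyticAt_id.sub analyticAt_const)).mul hd
  refine ⟨hm, ?_⟩
  rw [hd.order_eq_nat_iff] at hn
  obtain ⟨g, hg, hg0, hfg⟩ := hn
  rw [hm.order_eq_nat_iff]
  refine ⟨g, hg, hg0, ?_⟩
  filter_upwards [hfg] with z hz
  simp only [hz, smul_eq_mul]; ring

lemma ordN_pos {f : ℂ → ℂ} {w : ℂ} (hf : AnalyticAt ℂ f w)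
    (h0 : f w = 0) (hne : ¬ ∀ᶠ z in 𝓝 w, f z = 0) : 1 ≤ ordN f w := by
  have htop : hf.order ≠ ⊤ := by rwa [ne_eq, hf.order_eq_top_iff]
  obtain ⟨n, hn'⟩ : ∃ n : ℕ, hf.order = (n : ℕ∞) :=
    ⟨hf.order.toNat, (ENat.coe_toNat htop).symm⟩
  have hn := hn'
  rw [hf.order_eq_nat_iff] at hn'
  obtain ⟨g, hg, hg0, hfg⟩ := hn'
  have hval := hfg.self_of_nhds
  rcases Nat.eq_zero_or_pos n with rfl | hpos
  · simp only [pow_zero, one_smul] at hval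
    exact absurd (hval ▸ h0) hg0
  · rw [ordN_eq hf, hn, ENat.toNat_coe]; exact hpos

/-- Identity theorem consequence: `f` is not locally zero anywhere in the open disc. -/
lemma not_ev_zero {f : ℂ → ℂ}
    (hcont : ContinuousOn f (closedBall (0 : ℂ) 1))
    (hcirc : ∀ z : ℂ, ‖z‖ = 1 → ‖f z‖ = 1)
    (hA : AnalyticOnNhd ℂ f (ball (0 : ℂ) 1))
    {w : ℂ} (hw : w ∈ ball (0 : ℂ) 1) :
    ¬ ∀ᶠ z in 𝓝 w, f z = 0 := by
  intro hev
  have h0 : EqOn f 0 (ball (0 : ℂ) 1) :=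
    hA.eqOn_zero_of_preconnected_of_eventuallyEq_zero (convex_ball (0:ℂ) 1).isPreconnected hw
      (hev.mono fun z hz => hz)
  have h0' : EqOn f 0 (closedBall (0 : ℂ) 1) :=
    h0.of_subset_closure hcont continuousOn_const ball_subset_closedBall
      (by rw [closure_ball (0 : ℂ) one_ne_zero])
  have h1 : (1 : ℂ) ∈ closedBall (0 : ℂ) 1 := by
    simp [mem_closedBall_zero_iff]
  have := hcirc 1 (by simp)
  rw [h0' h1] at this
  simp at this

/-- A zero-free self-map of the disc with unimodular boundary values is constant. -/
lemma const_of_no_zero {f : ℂ → ℂ}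
    (hcont : ContinuousOn f (closedBall (0 : ℂ) 1))
    (hdiff : DifferentiableOn ℂ f (ball (0 : ℂ) 1))
    (hbound : ∀ z ∈ closedBall (0 : ℂ) 1, ‖f z‖ ≤ 1)
    (hcirc : ∀ z : ℂ, ‖z‖ = 1 → ‖f z‖ = 1)
    (hz : ∀ z ∈ ball (0 : ℂ) 1, f z ≠ 0) :
    ‖f 0‖ = 1 ∧ ∀ z ∈ closedBall (0 : ℂ) 1, f z = f 0 := by
  have hcl : closure (ball (0 : ℂ) 1) = closedBall (0 : ℂ) 1 :=
    closure_ball (0 : ℂ) one_ne_zero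
  have hfr : frontier (ball (0 : ℂ) 1) = sphere (0 : ℂ) 1 :=
    frontier_ball (0 : ℂ) one_ne_zero
  have hne : ∀ z ∈ closedBall (0 : ℂ) 1, f z ≠ 0 := by
    intro z hzcb
    rcases lt_or_eq_of_le (mem_closedBall_zero_iff.mp hzcb) with h | h
    · exact hz z (mem_ball_zero_iff.mpr h)
    · intro h0
      have := hcirc z (by assumption)
      rw [h0] at this; simp at this
  have hd1 : DiffContOnCl ℂ (fun z => (f z)⁻¹) (ball (0 : ℂ) 1) := by
    refine ⟨hdiff.inv (fun z hzb => hz z hzb), ?_⟩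
    rw [hcl]
    exact hcont.inv₀ hne
  have hge : ∀ z ∈ closedBall (0 : ℂ) 1, ‖f z‖ = 1 := by
    intro z hzcb
    have hle : ‖(f z)⁻¹‖ ≤ 1 := by
      refine Complex.norm_le_of_forall_mem_frontier_norm_le isBounded_ball hd1 ?_ ?_
      · intro w hwf
        rw [hfr, mem_sphere_zero_iff_norm] at hwf
        have := hcirc w (by assumption)
        rw [norm_inv, this]; norm_num
      · rwa [hcl]
    rw [norm_inv] at hle
    have h0 : ‖f z‖ ≠ 0 := by
      simp only [ne_eq, norm_eq_zero]; exact hne z hzcb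
    have h1 : 1 ≤ ‖f z‖ := by
      rw [inv_le_one_iff₀] at hle
      rcases hle with h | h
      · exact absurd (le_antisymm h (norm_nonneg _)) h0
      · exact h
    exact le_antisymm (hbound z hzcb) h1
  have hmax : IsMaxOn (norm ∘ f) (ball (0 : ℂ) 1) 0 := by
    intro z hzb
    have h1 := hge z (ball_subset_closedBall hzb)
    have h2 := hge 0 (mem_closedBall_self zero_le_one)
    simp only [Set.mem_setOf_eq, Function.comp_apply, h1, h2, le_refl]
  have hd2 : DiffContOnCl ℂ f (ball (0 : ℂ) 1) := ⟨hdiff, by rwa [hcl]⟩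
  have heq := Complex.eqOn_closure_of_isPreconnected_of_isMaxOn_norm
    (convex_ball (0:ℂ) 1).isPreconnected isOpen_ball hd2 (mem_ball_self one_pos) hmax
  rw [hcl] at heq
  exact ⟨hge 0 (mem_closedBall_self zero_le_one), fun z hzcb => heq hzcb⟩

/-- The zero set of `f` in the open disc is finite. -/
lemma zeros_finite {f : ℂ → ℂ}
    (hcont : ContinuousOn f (closedBall (0 : ℂ) 1))
    (hcirc : ∀ z : ℂ, ‖z‖ = 1 → ‖f z‖ = 1)
    (hA : AnalyticOnNhd ℂ f (ball (0 : ℂ) 1)) :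
    {z | z ∈ ball (0 : ℂ) 1 ∧ f z = 0}.Finite := by
  set K := {z | z ∈ ball (0 : ℂ) 1 ∧ f z = 0} with hK
  have hKc : K = {z | z ∈ closedBall (0 : ℂ) 1 ∧ f z = 0} := by
    ext z
    constructor
    · rintro ⟨hz, h0⟩; exact ⟨ball_subset_closedBall hz, h0⟩
    · rintro ⟨hz, h0⟩
      refine ⟨?_, h0⟩
      rcases lt_or_eq_of_le (mem_closedBall_zero_iff.mp hz) with h | h
      · exact mem_ball_zero_iff.mpr h
      · have := hcirc z (by assumption)
        rw [h0] at this; simp at this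
  have hclosed : IsClosed K := by
    rw [hKc]
    have : {z | z ∈ closedBall (0 : ℂ) 1 ∧ f z = 0}
        = closedBall (0 : ℂ) 1 ∩ f ⁻¹' {0} := by
      ext z; simp [Set.mem_inter_iff]
    rw [this]
    exact hcont.preimage_isClosed_of_isClosed isClosed_closedBall isClosed_singleton
  have hcomp : IsCompact K :=
    (isCompact_closedBall (0 : ℂ) 1).of_isClosed_subset hclosed
      (by rw [hKc]; exact fun z hz => hz.1)
  have hiso : ∀ z ∈ K, ∃ U : Set ℂ, IsOpen U ∧ z ∈ U ∧ ∀ y ∈ U, y ≠ z → f y ≠ 0 := by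
    intro z hzK
    have hz := (hA z hzK.1).eventually_eq_zero_or_eventually_ne_zero
    rcases hz with hz | hz
    · exact absurd hz (not_ev_zero hcont hcirc hA hzK.1)
    · rw [eventually_nhdsWithin_iff] at hz
      rw [_root_.eventually_nhds_iff] at hz
      obtain ⟨U, hU, hUo, hzU⟩ := hz
      exact ⟨U, hUo, hzU, fun y hy hne => hU y hy (by simpa using hne)⟩
  choose! U hUo hUm hU using hiso
  have hcover : K ⊆ ⋃ z ∈ K, U z := fun z hz => Set.mem_biUnion hz (hUm z hz)
  obtain ⟨b, hbK, hbfin, hbcover⟩ :=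
    hcomp.elim_finite_subcover_image (fun z hz => hUo z hz) hcover
  refine Set.Finite.subset hbfin ?_
  intro x hxK
  obtain ⟨z, hzb, hxU⟩ := Set.mem_iUnion₂.mp (hbcover hxK)
  rcases eq_or_ne x z with rfl | hne
  · exact hzb
  · exact absurd hxK.2 (hU z (hbK hzb) x hxU hne)

lemma blaschke_key : ∀ (N : ℕ) (f : ℂ → ℂ),
    ContinuousOn f (closedBall (0 : ℂ) 1) →
    DifferentiableOn ℂ f (ball (0 : ℂ) 1) →
    (∀ z ∈ closedBall (0 : ℂ) 1, ‖f z‖ ≤ 1) →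
    (∀ z : ℂ, ‖z‖ = 1 → ‖f z‖ = 1) →
    (∃ z ∈ ball (0 : ℂ) 1, f z = 0) →
    (∃ s : Finset ℂ, ↑s ⊆ ball (0 : ℂ) 1 ∧ (∀ z ∈ ball (0 : ℂ) 1, f z = 0 → z ∈ s) ∧
      ∑ w ∈ s, ordN f w ≤ N) →
    ∃ (n : ℕ) (ρ : ℂ) (ζ : Fin n → ℂ), 1 ≤ n ∧ ‖ρ‖ = 1 ∧
      (∀ i, ‖ζ i‖ < 1) ∧
      ∀ z ∈ closedBall (0 : ℂ) 1,
        f z = ρ * ∏ i, (z - ζ i) / (1 - (starRingEnd ℂ) (ζ i) * z) := by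
  intro N
  induction N with
  | zero =>
    intro f hcont hdiff hbound hcirc hzero hsum
    exfalso
    obtain ⟨ζ, hζb, hζ0⟩ := hzero
    obtain ⟨s, hs_sub, hs_mem, hsN⟩ := hsum
    have hAf : AnalyticOnNhd ℂ f (ball (0 : ℂ) 1) := hdiff.analyticOnNhd isOpen_ball
    have h1 : 1 ≤ ordN f ζ :=
      ordN_pos (hAf ζ hζb) hζ0 (not_ev_zero hcont hcirc hAf hζb)
    have h2 : ordN f ζ ≤ ∑ w ∈ s, ordN f w :=
      Finset.single_le_sum (fun w _ => Nat.zero_le _) (hs_mem ζ hζb hζ0)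
    omega
  | succ N ih =>
    intro f hcont hdiff hbound hcirc hzero hsum
    obtain ⟨ζ, hζb, hζ0⟩ := hzero
    set d := dslope f ζ with hd_def
    have hfd : ∀ z, f z = (z - ζ) * d z := by
      intro z
      have := sub_smul_dslope f ζ z
      rw [hζ0, sub_zero, smul_eq_mul] at this
      exact this.symm
    have hdd : DifferentiableOn ℂ d (ball (0 : ℂ) 1) :=
      (differentiableOn_dslope (isOpen_ball.mem_nhds hζb)).mpr hdiff
    have hdc : ContinuousOn d (closedBall (0 : ℂ) 1) := by
      intro w hw
      rcases eq_or_ne w ζ with rfl | hne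
      · exact (continuousAt_dslope_same.2
          (hdiff.differentiableAt (isOpen_ball.mem_nhds hζb))).continuousWithinAt
      · have hq : ContinuousWithinAt (fun z => f z * (z - ζ)⁻¹) (closedBall (0 : ℂ) 1) w :=
          (hcont w hw).mul
            (((continuous_id.sub continuous_const).continuousWithinAt).inv₀ (sub_ne_zero.2 hne))
        refine hq.congr_of_eventuallyEq ?_ ?_
        · filter_upwards [nhdsWithin_le_nhds (eventually_ne_nhds hne)] with z hz
          rw [hd_def, dslope_of_ne f hz, slope_def_field, hζ0, sub_zero, div_eq_mul_inv]
        · rw [hd_def, dslope_of_ne f hne, slope_def_field, hζ0, sub_zero, div_eq_mul_inv]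
    set g := fun z => (1 - (starRingEnd ℂ) ζ * z) * d z with hg_def
    have habsζ : ‖ζ‖ < 1 := by rwa [← mem_ball_zero_iff]
    have hu_ne : ∀ z ∈ closedBall (0 : ℂ) 1, (1 - (starRingEnd ℂ) ζ * z) ≠ 0 := by
      intro z hz
      have : ‖(starRingEnd ℂ) ζ * z‖ < 1 := by
        rw [norm_mul, Complex.norm_conj]
        calc ‖ζ‖ * ‖z‖ ≤ ‖ζ‖ * 1 := by
              apply mul_le_mul_of_nonneg_left _ (norm_nonneg _)
              rwa [← mem_closedBall_zero_iff]
          _ < 1 := by rwa [mul_one]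
      intro h0
      rw [sub_eq_zero] at h0
      rw [← h0] at this
      simp at this
    have hgc : ContinuousOn g (closedBall (0 : ℂ) 1) :=
      ((continuous_const.sub (continuous_const.mul continuous_id)).continuousOn).mul hdc
    have hgd : DifferentiableOn ℂ g (ball (0 : ℂ) 1) :=
      ((differentiable_const _).sub ((differentiable_const _).mul differentiable_id)).differentiableOn.mul hdd
    have hkey_abs : ∀ z : ℂ, ‖z‖ = 1 →
        ‖1 - (starRingEnd ℂ) ζ * z‖ = ‖z - ζ‖ := by
      intro z hz1
      have hzz : z * (starRingEnd ℂ) z = 1 := by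
        rw [Complex.mul_conj]
        rw [← Complex.sq_norm, hz1]; norm_num
      have : 1 - (starRingEnd ℂ) ζ * z = z * ((starRingEnd ℂ) z - (starRingEnd ℂ) ζ) := by
        rw [mul_sub, hzz]; ring
      rw [this, norm_mul, hz1, one_mul, ← map_sub, Complex.norm_conj]
    have hgcirc : ∀ z : ℂ, ‖z‖ = 1 → ‖g z‖ = 1 := by
      intro z hz1
      have := hcirc z hz1
      rw [hfd z, norm_mul] at this
      rw [hg_def]
      simp only [norm_mul]
      rw [hkey_abs z hz1]
      exact this
    have hgb : ∀ z ∈ closedBall (0 : ℂ) 1, ‖g z‖ ≤ 1 := by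
      intro z hz
      have hdcc : DiffContOnCl ℂ g (ball (0 : ℂ) 1) :=
        ⟨hgd, by rw [closure_ball (0 : ℂ) one_ne_zero]; exact hgc⟩
      refine Complex.norm_le_of_forall_mem_frontier_norm_le isBounded_ball hdcc ?_ ?_
      · intro w hwf
        rw [frontier_ball (0 : ℂ) one_ne_zero, mem_sphere_zero_iff_norm] at hwf
        rw [hgcirc w (by assumption)]
      · rwa [closure_ball (0 : ℂ) one_ne_zero]
    have hrec : ∀ z ∈ closedBall (0 : ℂ) 1,
        f z = (z - ζ) / (1 - (starRingEnd ℂ) ζ * z) * g z := by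
      intro z hz
      have h0 := hu_ne z hz
      rw [hfd z, hg_def]
      beta_reduce
      rw [div_mul_eq_mul_div, eq_div_iff h0]
      ring
    by_cases hgz : ∃ z ∈ ball (0 : ℂ) 1, g z = 0
    · -- recurse
      obtain ⟨s, hs_sub, hs_mem, hsN⟩ := hsum
      have hζs : ζ ∈ s := hs_mem ζ hζb hζ0
      have hAf : AnalyticOnNhd ℂ f (ball (0 : ℂ) 1) := hdiff.analyticOnNhd isOpen_ball
      have hAd : AnalyticOnNhd ℂ d (ball (0 : ℂ) 1) := hdd.analyticOnNhd isOpen_ball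
      have hfun : f = fun z => (z - ζ) * d z := funext hfd
      -- order bookkeeping
      have horder : ∀ w ∈ s, ordN g w ≤ ordN f w ∧ (w = ζ → ordN g w < ordN f w) := by
        intro w hws
        have hwb : w ∈ ball (0 : ℂ) 1 := hs_sub hws
        have hdw : AnalyticAt ℂ d w := hAd w hwb
        obtain ⟨m, hm⟩ : ∃ m : ℕ, hdw.order = m := by
          have htop : hdw.order ≠ ⊤ := by
            rw [ne_eq, hdw.order_eq_top_iff]
            intro hev
            refine not_ev_zero hcont hcirc hAf hwb ?_
            filter_upwards [hev] with z hz
            rw [hfd z, hz, mul_zero]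
          exact ⟨hdw.order.toNat, (ENat.coe_toNat htop).symm⟩
        have hgw : ordN g w = m := by
          have hu : AnalyticAt ℂ (fun z => 1 - (starRingEnd ℂ) ζ * z) w :=
            (analyticAt_const.sub (analyticAt_const.mul analyticAt_id))
          obtain ⟨hgan, hgo⟩ :=
            order_mul_unit hu hdw (hu_ne w (ball_subset_closedBall hwb)) hm
          rw [ordN_eq hgan, hgo, ENat.toNat_coe]
        rcases eq_or_ne w ζ with rfl | hne
        · have hfw : ordN f w = m + 1 := by
            obtain ⟨hfan, hfo⟩ := order_sub_mul hdw hm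
            rw [hfun, ordN_eq hfan, hfo, ENat.toNat_coe]
          constructor
          · rw [hgw, hfw]; omega
          · intro _; rw [hgw, hfw]; omega
        · have hfw : ordN f w = m := by
            have hu : AnalyticAt ℂ (fun z => z - ζ) w :=
              (analyticAt_id.sub analyticAt_const)
            obtain ⟨hfan, hfo⟩ := order_mul_unit hu hdw (sub_ne_zero.2 hne) hm
            rw [hfun, ordN_eq hfan, hfo, ENat.toNat_coe]
          exact ⟨by rw [hgw, hfw], fun h => absurd h hne⟩
      have hlt : ∑ w ∈ s, ordN g w < ∑ w ∈ s, ordN f w := by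
        refine Finset.sum_lt_sum (fun w hw => (horder w hw).1) ⟨ζ, hζs, ?_⟩
        exact (horder ζ hζs).2 rfl
      have hgsum : ∃ s' : Finset ℂ, ↑s' ⊆ ball (0 : ℂ) 1 ∧
          (∀ z ∈ ball (0 : ℂ) 1, g z = 0 → z ∈ s') ∧ ∑ w ∈ s', ordN g w ≤ N := by
        refine ⟨s, hs_sub, ?_, ?_⟩
        · intro z hzb hz0
          apply hs_mem z hzb
          rw [hfd z]
          rcases mul_eq_zero.mp hz0 with h | h
          · exact absurd h (hu_ne z (ball_subset_closedBall hzb))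
          · rw [h, mul_zero]
        · omega
      obtain ⟨n, ρ, ζs, hn1, hρ, hζlt, heq⟩ := ih g hgc hgd hgb hgcirc hgz hgsum
      refine ⟨n + 1, ρ, Fin.cons ζ ζs, by omega, hρ, ?_, ?_⟩
      · intro i
        refine Fin.cases ?_ ?_ i
        · rwa [Fin.cons_zero]
        · intro j; rw [Fin.cons_succ]; exact hζlt j
      · intro z hz
        rw [hrec z hz, heq z hz, Fin.prod_univ_succ]
        simp only [Fin.cons_zero, Fin.cons_succ]
        ring
    · -- g has no zero: constant
      push_neg at hgz
      obtain ⟨habs, hconst⟩ := const_of_no_zero hgc hgd hgb hgcirc hgz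
      refine ⟨1, g 0, ![ζ], le_refl 1, habs, ?_, ?_⟩
      · intro i; fin_cases i; simpa using habsζ
      · intro z hz
        rw [hrec z hz, hconst z hz, Fin.prod_univ_one]
        simp only [Matrix.cons_val_zero]
        ring

/-- A non-constant map of the closed unit disc to itself which is analytic in the
interior and maps the boundary circle to itself coincides on the closed unit disc
with a finite Blaschke product. -/
theorem eq_blaschke_of_maps_disc_to_disc_and_circle_to_circle
    (f : ℂ → ℂ)
    (hcont : ContinuousOn f (closedBall (0 : ℂ) 1))
    (hdiff : DifferentiableOn ℂ f (ball (0 : ℂ) 1))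
    (hnonconst : ∃ z ∈ ball (0 : ℂ) 1, ∃ w ∈ ball (0 : ℂ) 1, f z ≠ f w)
    (hbound : ∀ z ∈ closedBall (0 : ℂ) 1, ‖f z‖ ≤ 1)
    (hcirc : ∀ z : ℂ, ‖z‖ = 1 → ‖f z‖ = 1) :
    ∃ (n : ℕ) (ρ : ℂ) (ζ : Fin n → ℂ), 1 ≤ n ∧ ‖ρ‖ = 1 ∧
      (∀ i, ‖ζ i‖ < 1) ∧
      ∀ z ∈ closedBall (0 : ℂ) 1,
        f z = ρ * ∏ i, (z - ζ i) / (1 - (starRingEnd ℂ) (ζ i) * z) := by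
  have hzero : ∃ z ∈ ball (0 : ℂ) 1, f z = 0 := by
    by_contra h
    push_neg at h
    obtain ⟨_, hconst⟩ := const_of_no_zero hcont hdiff hbound hcirc h
    obtain ⟨z, hzb, w, hwb, hne⟩ := hnonconst
    exact hne (by rw [hconst z (ball_subset_closedBall hzb),
      hconst w (ball_subset_closedBall hwb)])
  have hAf : AnalyticOnNhd ℂ f (ball (0 : ℂ) 1) := hdiff.analyticOnNhd isOpen_ball
  have hK := zeros_finite hcont hcirc hAf
  refine blaschke_key (∑ w ∈ hK.toFinset, ordN f w) f hcont hdiff hbound hcirc hzero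
    ⟨hK.toFinset, ?_, ?_, le_refl _⟩
  · intro z hz
    rw [hK.coe_toFinset] at hz
    exact hz.1
  · intro z hzb hz0
    rw [hK.mem_toFinset]
    exact ⟨hzb, hz0⟩
end

section
/- Let T₁ be a finite Blaschke product of degree n ≥ 1 and T₂ a finite Blaschke product of degree m ≥ 1. Then the composition T₂ ∘ T₁ agrees on the closed unit disc with a finite Blaschke product of degree n·m: there exist ρ ∈ ℂ with |ρ| = 1 and ζ_1, …, ζ_{nm} ∈ ℂ with |ζ_j| < 1 such that T₂(T₁(z)) = ρ ∏_{j=1}^{nm} (z − ζ_j)/(1 − conj(ζ_j) z) for every z ∈ ℂ with |z| ≤ 1. -/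
open Complex Metric Polynomial Finset

private lemma normSq_key (ζ z : ℂ) :
    normSq (1 - (starRingEnd ℂ) ζ * z) - normSq (z - ζ)
      = (1 - normSq z) * (1 - normSq ζ) := by
  simp only [Complex.normSq_apply, Complex.mul_re, Complex.mul_im, Complex.sub_re,
    Complex.sub_im, Complex.one_re, Complex.one_im, Complex.conj_re, Complex.conj_im]
  ring

private lemma one_sub_ne (ζ z : ℂ) (hζ : ‖ζ‖ < 1) (hz : ‖z‖ ≤ 1) :
    1 - (starRingEnd ℂ) ζ * z ≠ 0 := by
  intro h
  have h1 : (starRingEnd ℂ) ζ * z = 1 := by linear_combination -h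
  have h2 : ‖(starRingEnd ℂ) ζ * z‖ < 1 := by
    rw [norm_mul, Complex.norm_conj]
    nlinarith [norm_nonneg ζ, norm_nonneg z]
  rw [h1] at h2; simp at h2

private lemma abs_le_factor (ζ z : ℂ) (hζ : ‖ζ‖ < 1) (hz : ‖z‖ ≤ 1) :
    ‖z - ζ‖ ≤ ‖1 - (starRingEnd ℂ) ζ * z‖ := by
  have h := normSq_key ζ z
  have h1 : normSq z ≤ 1 := by rw [Complex.normSq_eq_norm_sq]; nlinarith [norm_nonneg z]
  have h2 : normSq ζ ≤ 1 := by rw [Complex.normSq_eq_norm_sq]; nlinarith [norm_nonneg ζ]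
  have := Complex.sq_norm (z - ζ)
  have := Complex.sq_norm (1 - (starRingEnd ℂ) ζ * z)
  nlinarith [norm_nonneg (z - ζ), norm_nonneg (1 - (starRingEnd ℂ) ζ * z)]

private lemma factor_le_abs (ζ z : ℂ) (hζ : ‖ζ‖ < 1) (hz : 1 ≤ ‖z‖) :
    ‖1 - (starRingEnd ℂ) ζ * z‖ ≤ ‖z - ζ‖ := by
  have h := normSq_key ζ z
  have h1 : 1 ≤ normSq z := by rw [Complex.normSq_eq_norm_sq]; nlinarith
  have h2 : normSq ζ ≤ 1 := by rw [Complex.normSq_eq_norm_sq]; nlinarith [norm_nonneg ζ]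
  have := Complex.sq_norm (z - ζ)
  have := Complex.sq_norm (1 - (starRingEnd ℂ) ζ * z)
  nlinarith [norm_nonneg (z - ζ), norm_nonneg (1 - (starRingEnd ℂ) ζ * z)]

private lemma key (n : ℕ) (ρ₁ : ℂ) (hρ₁ : ‖ρ₁‖ = 1)
    (ζ : Fin n → ℂ) (hζ : ∀ i, ‖ζ i‖ < 1)
    (a : ℂ) (ha : ‖a‖ < 1) :
    ∃ (σ : ℂ) (w : Fin n → ℂ), ‖σ‖ = 1 ∧ (∀ k, ‖w k‖ < 1) ∧
      ∀ z : ℂ, ‖z‖ ≤ 1 →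
        ((ρ₁ * ∏ i, (z - ζ i) / (1 - (starRingEnd ℂ) (ζ i) * z)) - a) /
          (1 - (starRingEnd ℂ) a * (ρ₁ * ∏ i, (z - ζ i) / (1 - (starRingEnd ℂ) (ζ i) * z)))
        = σ * ∏ k, (z - w k) / (1 - (starRingEnd ℂ) (w k) * z) := by
  have hρ₁0 : ρ₁ ≠ 0 := by intro h; rw [h] at hρ₁; simp at hρ₁
  set P : ℂ[X] := C ρ₁ * ∏ i, (X - C (ζ i)) with hP
  set Q : ℂ[X] := ∏ i, (1 - C ((starRingEnd ℂ) (ζ i)) * X) with hQ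
  set R : ℂ[X] := P - C a * Q with hR
  -- evaluations
  have hPe : ∀ z : ℂ, P.eval z = ρ₁ * ∏ i, (z - ζ i) := by
    intro z; simp [hP, eval_prod]
  have hQe : ∀ z : ℂ, Q.eval z = ∏ i, (1 - (starRingEnd ℂ) (ζ i) * z) := by
    intro z; simp [hQ, eval_prod]
  have hRe : ∀ z : ℂ, R.eval z = P.eval z - a * Q.eval z := by
    intro z; simp [hR]
  -- degrees
  have hPm : (∏ i, (X - C (ζ i)) : ℂ[X]).Monic := monic_prod_of_monic _ _ fun i _ => monic_X_sub_C _
  have hPdeg : (∏ i, (X - C (ζ i)) : ℂ[X]).natDegree = n := by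
    rw [natDegree_prod_of_monic _ _ fun i _ => monic_X_sub_C _]
    simp
  have hPn : P.natDegree ≤ n := by
    rw [hP]; exact (natDegree_C_mul_le _ _).trans (le_of_eq hPdeg)
  have hQfac : ∀ i : Fin n, (1 - C ((starRingEnd ℂ) (ζ i)) * X : ℂ[X]).natDegree ≤ 1 := by
    intro i
    have h2 : (C ((starRingEnd ℂ) (ζ i)) * X : ℂ[X]).natDegree ≤ 1 :=
      (natDegree_C_mul_le _ _).trans (by simp)
    exact (natDegree_sub_le _ _).trans (max_le (by simp) h2)
  have hQn : Q.natDegree ≤ n := by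
    rw [hQ]
    refine (natDegree_prod_le _ _).trans ?_
    calc (∑ i, (1 - C ((starRingEnd ℂ) (ζ i)) * X : ℂ[X]).natDegree)
        ≤ ∑ _i : Fin n, 1 := Finset.sum_le_sum fun i _ => hQfac i
      _ = n := by simp
  -- coefficient n
  have hPcoeff : P.coeff n = ρ₁ := by
    have h1 : (∏ i, (X - C (ζ i)) : ℂ[X]).coeff n = 1 := by
      have := hPm.coeff_natDegree; rwa [hPdeg] at this
    rw [hP, coeff_C_mul, h1, mul_one]
  have hQcoeff : Q.coeff n = ∏ i, (-(starRingEnd ℂ) (ζ i)) := by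
    have := coeff_prod_of_natDegree_le (s := (univ : Finset (Fin n)))
      (fun i => (1 - C ((starRingEnd ℂ) (ζ i)) * X : ℂ[X])) 1 (fun i _ => hQfac i)
    simp only [Finset.card_univ, Fintype.card_fin, mul_one] at this
    rw [hQ, this]
    congr 1; ext i
    simp [coeff_one]
  set c : ℂ := ρ₁ - a * ∏ i, (-(starRingEnd ℂ) (ζ i)) with hc
  have hRcoeff : R.coeff n = c := by
    rw [hR, coeff_sub, hPcoeff, coeff_C_mul, hQcoeff, hc]
  have habsprod : ‖∏ i, (-(starRingEnd ℂ) (ζ i))‖ ≤ 1 := by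
    rw [norm_prod]
    refine Finset.prod_le_one (fun i _ => norm_nonneg _) (fun i _ => ?_)
    rw [norm_neg, Complex.norm_conj]; exact (hζ i).le
  have hc0 : c ≠ 0 := by
    intro h
    have : ρ₁ = a * ∏ i, (-(starRingEnd ℂ) (ζ i)) := by linear_combination h
    have : ‖ρ₁‖ ≤ ‖a‖ * 1 := by
      rw [this, norm_mul]
      exact mul_le_mul_of_nonneg_left habsprod (norm_nonneg a)
    rw [hρ₁] at this; linarith
  have hRn : R.natDegree = n := by
    have h1 : R.natDegree ≤ n := by
      rw [hR]
      exact (natDegree_sub_le _ _).trans (max_le hPn ((natDegree_C_mul_le _ _).trans hQn))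
    have h2 : n ≤ R.natDegree := le_natDegree_of_ne_zero (by rw [hRcoeff]; exact hc0)
    omega
  have hRlead : R.leadingCoeff = c := by rw [leadingCoeff, hRn, hRcoeff]
  have hR0 : R ≠ 0 := fun h => hc0 (by rw [← hRlead, h, leadingCoeff_zero])
  -- roots in the open disc
  have hroot : ∀ x : ℂ, R.eval x = 0 → ‖x‖ < 1 := by
    intro x hx
    by_contra hge
    push_neg at hge
    have hPQ : P.eval x = a * Q.eval x := by
      have h := hRe x; rw [hx] at h; linear_combination -h
    by_cases hQ0 : Q.eval x = 0
    · have hP0 : P.eval x = 0 := by rw [hPQ, hQ0, mul_zero]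
      rw [hPe] at hP0
      rcases mul_eq_zero.mp hP0 with h | h
      · exact hρ₁0 h
      · obtain ⟨i, _, hi⟩ := Finset.prod_eq_zero_iff.mp h
        have : x = ζ i := by linear_combination hi
        rw [this] at hge; linarith [hζ i]
    · have hle : ‖Q.eval x‖ ≤ ‖P.eval x‖ := by
        rw [hPe, hQe, norm_mul, hρ₁, one_mul, norm_prod, norm_prod]
        exact Finset.prod_le_prod (fun i _ => norm_nonneg _)
          (fun i _ => factor_le_abs (ζ i) x (hζ i) hge)
      have : ‖P.eval x‖ < ‖Q.eval x‖ := by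
        rw [hPQ, norm_mul]
        have hq : 0 < ‖Q.eval x‖ := norm_pos_iff.mpr hQ0
        nlinarith
      linarith
  -- factor R
  have hsplits : Splits R := IsAlgClosed.splits R
  have hcard : Multiset.card R.roots = n := by
    rw [splits_iff_card_roots.mp hsplits, hRn]
  have hfac := hsplits.eq_prod_roots
  rw [hRlead] at hfac
  -- enumerate roots
  set l : List ℂ := R.roots.toList with hl
  have hlen : l.length = n := by rw [hl, Multiset.length_toList, hcard]
  set w : Fin n → ℂ := fun k => l.get (Fin.cast hlen.symm k) with hw
  have hprodw : ∀ f : ℂ → ℂ, (Multiset.map f R.roots).prod = ∏ k, f (w k) := by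
    intro f
    have h1 : R.roots = (l : Multiset ℂ) := (Multiset.coe_toList _).symm
    rw [h1]
    rw [Multiset.map_coe, Multiset.prod_coe]
    conv_lhs => rw [← List.ofFn_get l, List.map_ofFn]
    rw [List.prod_ofFn]
    exact Fintype.prod_equiv (finCongr hlen) _ _ (fun i => rfl)
  have hwroot : ∀ k, w k ∈ R.roots := by
    intro k
    have h1 : w k ∈ l := List.get_mem _ _
    rw [hl] at h1
    exact (Multiset.mem_toList).mp h1
  have hwlt : ∀ k, ‖w k‖ < 1 := fun k =>
    hroot _ (isRoot_of_mem_roots (hwroot k))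
  have hRfac : ∀ z : ℂ, R.eval z = c * ∏ k, (z - w k) := by
    intro z
    conv_lhs => rw [hfac]
    rw [eval_mul, eval_C, eval_multiset_prod, Multiset.map_map]
    congr 1
    have h2 : ((fun p : ℂ[X] => eval z p) ∘ fun a => X - C a) = fun u : ℂ => z - u := by
      funext u; simp
    rw [h2, hprodw (fun u => z - u)]
  -- conjugate of rho
  have hrz : ρ₁ * (starRingEnd ℂ) ρ₁ = 1 := by
    rw [Complex.mul_conj]
    norm_cast
    rw [Complex.normSq_eq_norm_sq, hρ₁]; norm_num
  -- the denominator identity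
  have hDid : ∀ z : ℂ, Q.eval z - (starRingEnd ℂ) a * P.eval z
      = ρ₁ * (starRingEnd ℂ) c * ∏ k, (1 - (starRingEnd ℂ) (w k) * z) := by
    intro z
    by_cases hz0 : z = 0
    · subst hz0
      have h1 : Q.eval 0 = 1 := by rw [hQe]; simp
      have h2 : P.eval 0 = ρ₁ * ∏ i, (0 - ζ i) := hPe 0
      have h3 : (starRingEnd ℂ) c
          = (starRingEnd ℂ) ρ₁ - (starRingEnd ℂ) a * ∏ i, (0 - ζ i) := by
        rw [hc, map_sub, map_mul, map_prod]
        congr 1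
        congr 1
        refine Finset.prod_congr rfl fun i _ => ?_
        simp
      rw [h1, h2, h3]
      have h4 : ∀ k, (1 - (starRingEnd ℂ) (w k) * (0:ℂ)) = 1 := by intro k; simp
      rw [Finset.prod_congr rfl fun k _ => h4 k, Finset.prod_const_one, mul_one]
      linear_combination -hrz
    · set u : ℂ := ((starRingEnd ℂ) z)⁻¹ with hu
      have hzc : (starRingEnd ℂ) z ≠ 0 := by
        simpa using hz0
      have hcu : (starRingEnd ℂ) u = z⁻¹ := by
        rw [hu, map_inv₀, Complex.conj_conj]
      have A1 : ∀ ξ : ℂ, (starRingEnd ℂ) (u - ξ) * z = 1 - (starRingEnd ℂ) ξ * z := by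
        intro ξ
        rw [map_sub, hcu]
        field_simp
      have A2 : ∀ ξ : ℂ, (starRingEnd ℂ) (1 - (starRingEnd ℂ) ξ * u) * z = z - ξ := by
        intro ξ
        rw [map_sub, map_mul, Complex.conj_conj, hcu, map_one]
        field_simp
      have hzn : (z:ℂ)^n = ∏ _k : Fin n, z := by simp
      have e1 : (starRingEnd ℂ) (R.eval u) * z^n
          = (starRingEnd ℂ) c * ∏ k, (1 - (starRingEnd ℂ) (w k) * z) := by
        rw [hRfac u, map_mul, map_prod, hzn, mul_assoc, ← Finset.prod_mul_distrib]
        congr 1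
        exact Finset.prod_congr rfl fun k _ => A1 (w k)
      have e2 : (starRingEnd ℂ) (P.eval u) * z^n = (starRingEnd ℂ) ρ₁ * Q.eval z := by
        rw [hPe u, map_mul, map_prod, hzn, mul_assoc, ← Finset.prod_mul_distrib, hQe z]
        congr 1
        exact Finset.prod_congr rfl fun i _ => A1 (ζ i)
      have e3 : (starRingEnd ℂ) (Q.eval u) * z^n = ∏ i, (z - ζ i) := by
        rw [hQe u, map_prod, hzn, ← Finset.prod_mul_distrib]
        exact Finset.prod_congr rfl fun i _ => A2 (ζ i)
      have e0 : (starRingEnd ℂ) (R.eval u)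
          = (starRingEnd ℂ) (P.eval u) - (starRingEnd ℂ) a * (starRingEnd ℂ) (Q.eval u) := by
        rw [hRe u, map_sub, map_mul]
      calc Q.eval z - (starRingEnd ℂ) a * P.eval z
          = ρ₁ * ((starRingEnd ℂ) (R.eval u) * z^n) := by
            have step : ρ₁ * ((starRingEnd ℂ) (R.eval u) * z^n)
                = ρ₁ * ((starRingEnd ℂ) (P.eval u) * z^n)
                  - ρ₁ * (starRingEnd ℂ) a * ((starRingEnd ℂ) (Q.eval u) * z^n) := by
              rw [e0]; ring
            rw [step, e2, e3, hPe z]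
            linear_combination (- (eval z Q)) * hrz
        _ = ρ₁ * (starRingEnd ℂ) c * ∏ k, (1 - (starRingEnd ℂ) (w k) * z) := by
            rw [e1, mul_assoc]
  -- put everything together
  have hcc : (starRingEnd ℂ) c ≠ 0 := by simpa using hc0
  refine ⟨c / (ρ₁ * (starRingEnd ℂ) c), w, ?_, hwlt, ?_⟩
  · rw [norm_div, norm_mul, Complex.norm_conj, hρ₁, one_mul]
    rw [div_self]
    simpa using hc0
  · intro z hz
    have hQz : Q.eval z ≠ 0 := by
      rw [hQe]
      exact Finset.prod_ne_zero_iff.mpr fun i _ => one_sub_ne _ _ (hζ i) hz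
    have hB : ρ₁ * ∏ i, (z - ζ i) / (1 - (starRingEnd ℂ) (ζ i) * z)
        = P.eval z / Q.eval z := by
      rw [hPe, hQe, Finset.prod_div_distrib, mul_div_assoc]
    have hPleQ : ‖P.eval z‖ ≤ ‖Q.eval z‖ := by
      rw [hPe, hQe, norm_mul, hρ₁, one_mul, norm_prod, norm_prod]
      exact Finset.prod_le_prod (fun i _ => norm_nonneg _)
        (fun i _ => abs_le_factor (ζ i) z (hζ i) hz)
    have hDne : Q.eval z - (starRingEnd ℂ) a * P.eval z ≠ 0 := by
      intro h
      have h1 : Q.eval z = (starRingEnd ℂ) a * P.eval z := by linear_combination h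
      have h2 : ‖Q.eval z‖ = ‖a‖ * ‖P.eval z‖ := by
        rw [h1, norm_mul, Complex.norm_conj]
      have h3 : (0:ℝ) < ‖Q.eval z‖ := norm_pos_iff.mpr hQz
      nlinarith [norm_nonneg (P.eval z), norm_nonneg a,
        mul_le_mul_of_nonneg_left hPleQ (norm_nonneg a)]
    have hRz : P.eval z - a * Q.eval z = c * ∏ k, (z - w k) := by
      have h := hRfac z; rw [hRe z] at h; exact h
    have hDz := hDid z
    have h1 : P.eval z / Q.eval z - a = (P.eval z - a * Q.eval z) / Q.eval z := by
      field_simp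
    have h2 : 1 - (starRingEnd ℂ) a * (P.eval z / Q.eval z)
        = (Q.eval z - (starRingEnd ℂ) a * P.eval z) / Q.eval z := by
      field_simp
    have h3 : ∀ (x y q : ℂ), q ≠ 0 → (x/q)/(y/q) = x/y := by
      intro x y q hq
      by_cases hy : y = 0
      · simp [hy]
      · field_simp
    rw [hB, h1, h2, h3 _ _ _ hQz, hRz, hDz, Finset.prod_div_distrib]
    ring


/-- The composition of two finite Blaschke products of degrees `n` and `m` agrees
on the closed unit disc with a finite Blaschke product of degree `n * m`. -/
theorem blaschke_comp_blaschke
    (n m : ℕ) (hn : 1 ≤ n) (hm : 1 ≤ m)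
    (ρ₁ ρ₂ : ℂ) (hρ₁ : ‖ρ₁‖ = 1) (hρ₂ : ‖ρ₂‖ = 1)
    (ζ₁ : Fin n → ℂ) (hζ₁ : ∀ i, ‖ζ₁ i‖ < 1)
    (ζ₂ : Fin m → ℂ) (hζ₂ : ∀ i, ‖ζ₂ i‖ < 1)
    (T₁ T₂ : ℂ → ℂ)
    (hT₁ : ∀ z, T₁ z = ρ₁ * ∏ i, (z - ζ₁ i) / (1 - (starRingEnd ℂ) (ζ₁ i) * z))
    (hT₂ : ∀ z, T₂ z = ρ₂ * ∏ i, (z - ζ₂ i) / (1 - (starRingEnd ℂ) (ζ₂ i) * z)) :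
    ∃ (ρ : ℂ) (ζ : Fin (n * m) → ℂ), ‖ρ‖ = 1 ∧
      (∀ j, ‖ζ j‖ < 1) ∧
      ∀ z ∈ closedBall (0 : ℂ) 1,
        T₂ (T₁ z) = ρ * ∏ j, (z - ζ j) / (1 - (starRingEnd ℂ) (ζ j) * z) := by
  choose σ w hσ hw hEq using fun i : Fin m => key n ρ₁ hρ₁ ζ₁ hζ₁ (ζ₂ i) (hζ₂ i)
  set e : Fin (n * m) ≃ Fin m × Fin n :=
    (finCongr (Nat.mul_comm n m)).trans finProdFinEquiv.symm with he
  refine ⟨ρ₂ * ∏ i, σ i, fun j => w (e j).1 (e j).2, ?_, ?_, ?_⟩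
  · rw [norm_mul, hρ₂, one_mul, norm_prod,
      Finset.prod_congr rfl fun i _ => hσ i, Finset.prod_const_one]
  · intro j; exact hw _ _
  · intro z hz
    have hz1 : ‖z‖ ≤ 1 := by
      rw [Metric.mem_closedBall, dist_zero_right] at hz
      simpa using hz
    rw [hT₂, hT₁ z]
    rw [Finset.prod_congr rfl fun i _ => hEq i z hz1, Finset.prod_mul_distrib]
    have h2 : ∏ j : Fin (n * m),
          (z - w (e j).1 (e j).2) / (1 - (starRingEnd ℂ) (w (e j).1 (e j).2) * z)
        = ∏ i : Fin m, ∏ k : Fin n,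
            (z - w i k) / (1 - (starRingEnd ℂ) (w i k) * z) := by
      rw [Fintype.prod_equiv e
        (fun j => (z - w (e j).1 (e j).2) / (1 - (starRingEnd ℂ) (w (e j).1 (e j).2) * z))
        (fun p => (z - w p.1 p.2) / (1 - (starRingEnd ℂ) (w p.1 p.2) * z))
        (fun j => rfl)]
      exact Fintype.prod_prod_type _
    rw [h2]
    ring
end

section
/- Fix 0 < δ < 1 and let Ω = {ω ∈ ℂ : |ω| < δ} (the ball B_δ(0) ⊂ ℝ² ≅ ℂ). Let Φ(z) = z/√(1 − |z|²). Let d ≥ 1 and let φ_1, …, φ_d : Ω → ℂ be continuously differentiable functions with |φ_i(ω)| < 1 for all ω and i. Then there exists ε > 0 such that for every λ = (λ_1, …, λ_d) ∈ ℂ^d with |λ_i| < ε for all i, there exists ω ∈ Ω with |λ_i φ_i(ω)| < 1 for all i and Φ(ω) + Σ_{i=1}^d Φ(λ_i φ_i(ω)) = 0. In particular, the set {λ ∈ ℂ^d : ∃ ω ∈ Ω, Φ(ω) + Σ_i Φ(λ_i φ_i(ω)) = 0} contains an open neighbourhood of 0 and hence has positive 2d-dimensional Lebesgue measure. (Taking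 the base coefficient function ζ_2(ω) = ω, this shows that no finite-dimensional subspace of C¹-parametrised monic quadratic Blaschke product cocycles is a probe for the set of stable cocycles when Ω = B_δ(0) ⊂ ℝ².) -/
open Complex Metric MeasureTheory

/-- The inverse of `Φ`: `Ψ(w) = w / √(1 + |w|²)`. -/
noncomputable def PsiAux (w : ℂ) : ℂ := w / (Real.sqrt (1 + ‖w‖ ^ 2) : ℂ)

lemma sqrt_one_add_ge_one (w : ℂ) : (1 : ℝ) ≤ Real.sqrt (1 + ‖w‖ ^ 2) := by
  nlinarith [Real.sq_sqrt (by positivity : (0:ℝ) ≤ 1 + ‖w‖ ^ 2),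
    Real.sqrt_nonneg (1 + ‖w‖ ^ 2), sq_nonneg (‖w‖)]

lemma psiAux_abs_le (w : ℂ) : ‖PsiAux w‖ ≤ ‖w‖ := by
  have h1 := sqrt_one_add_ge_one w
  have h0 : (0:ℝ) < Real.sqrt (1 + ‖w‖ ^ 2) := lt_of_lt_of_le one_pos h1
  rw [PsiAux, norm_div, Complex.norm_real, Real.norm_eq_abs, abs_of_pos h0]
  exact div_le_self (norm_nonneg w) h1

lemma phiAux_psiAux (w : ℂ) :
    PsiAux w / (Real.sqrt (1 - ‖PsiAux w‖ ^ 2) : ℂ) = w := by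
  set a := ‖w‖ with ha
  have ha0 : 0 ≤ a := norm_nonneg w
  set s := Real.sqrt (1 + a ^ 2) with hs
  have h1 : (1:ℝ) ≤ s := sqrt_one_add_ge_one w
  have h0 : (0:ℝ) < s := lt_of_lt_of_le one_pos h1
  have hs2 : s ^ 2 = 1 + a ^ 2 := Real.sq_sqrt (by positivity)
  have habs : ‖PsiAux w‖ = a / s := by
    rw [PsiAux, norm_div, Complex.norm_real, Real.norm_eq_abs, abs_of_pos h0]
  have key : 1 - ‖PsiAux w‖ ^ 2 = (1 / s) ^ 2 := by
    rw [habs]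
    field_simp
    nlinarith [hs2]
  have hsqrt : Real.sqrt (1 - ‖PsiAux w‖ ^ 2) = 1 / s := by
    rw [key, Real.sqrt_sq (by positivity)]
  rw [hsqrt, PsiAux, ← ha, ← hs]
  have hsne : (s : ℂ) ≠ 0 := by
    simp only [ne_eq, Complex.ofReal_eq_zero]
    exact ne_of_gt h0
  push_cast
  field_simp

lemma phiAux_abs_le {z : ℂ} (hz : ‖z‖ ≤ 1 / 2) :
    ‖z / (Real.sqrt (1 - ‖z‖ ^ 2) : ℂ)‖ ≤ 2 * ‖z‖ := by
  have ha0 : 0 ≤ ‖z‖ := norm_nonneg z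
  have h34 : (3/4 : ℝ) ≤ 1 - ‖z‖ ^ 2 := by nlinarith
  have hhalf : (1/2 : ℝ) ≤ Real.sqrt (1 - ‖z‖ ^ 2) := by
    rw [show (1/2 : ℝ) = Real.sqrt (1/4) by
      rw [show (1/4 : ℝ) = (1/2)^2 by norm_num, Real.sqrt_sq]; norm_num]
    exact Real.sqrt_le_sqrt (by linarith)
  have h0 : (0:ℝ) < Real.sqrt (1 - ‖z‖ ^ 2) := lt_of_lt_of_le (by norm_num) hhalf
  rw [norm_div, Complex.norm_real, Real.norm_eq_abs, abs_of_pos h0, div_le_iff₀ h0]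
  nlinarith

lemma lips_helper {f : ℂ → ℂ} {r R : ℝ} (hrR : r < R)
    (hf : ContDiffOn ℝ 1 f (ball (0 : ℂ) R)) :
    ∃ C : NNReal, LipschitzOnWith C f (closedBall (0 : ℂ) r) := by
  rcases le_or_gt 0 r with hr | hr
  · have hsub : closedBall (0:ℂ) r ⊆ ball (0:ℂ) R := closedBall_subset_ball hrR
    have hdiff : ∀ x ∈ closedBall (0:ℂ) r, DifferentiableAt ℝ f x := fun x hx =>
      (hf.differentiableOn one_ne_zero).differentiableAt (isOpen_ball.mem_nhds (hsub hx))
    obtain ⟨C, hC⟩ := (isCompact_closedBall (0:ℂ) r).exists_bound_of_continuousOn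
      ((hf.continuousOn_fderiv_of_isOpen isOpen_ball le_rfl).mono hsub)
    refine ⟨C.toNNReal, Convex.lipschitzOnWith_of_nnnorm_fderiv_le hdiff ?_
      (convex_closedBall _ _)⟩
    intro x hx
    rw [← norm_toNNReal]
    exact Real.toNNReal_mono (hC x hx)
  · exact ⟨0, by rw [closedBall_eq_empty.2 hr]; exact lipschitzOnWith_empty 0 f⟩

lemma contDiffOn_phiAux :
    ContDiffOn ℝ 1 (fun z : ℂ => z / (Real.sqrt (1 - ‖z‖ ^ 2) : ℂ))
      (ball (0 : ℂ) 1) := by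
  intro z hz
  apply ContDiffAt.contDiffWithinAt
  have hz1 : ‖z‖ < 1 := by simpa [Complex.dist_eq] using hz
  have hpos : (0:ℝ) < 1 - ‖z‖ ^ 2 := by
    have := norm_nonneg z
    nlinarith
  have habs : ∀ w : ℂ, ‖w‖ ^ 2 = ‖w‖ ^ 2 := fun w => by
    rfl
  have hsq : ContDiffAt ℝ 1 (fun w : ℂ => 1 - ‖w‖ ^ 2) z := by
    have : ContDiffAt ℝ 1 (fun w : ℂ => (1:ℝ) - ‖w‖ ^ 2) z :=
      contDiffAt_const.sub (contDiff_norm_sq ℝ).contDiffAt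
    exact this.congr_of_eventuallyEq (Filter.Eventually.of_forall fun w => by simp)
  have hsqrt : ContDiffAt ℝ 1 (fun w : ℂ => Real.sqrt (1 - ‖w‖ ^ 2)) z :=
    (Real.contDiffAt_sqrt hpos.ne').comp z hsq
  have hinv : ContDiffAt ℝ 1 (fun w : ℂ => (Real.sqrt (1 - ‖w‖ ^ 2))⁻¹) z :=
    hsqrt.inv (Real.sqrt_pos.2 hpos).ne'
  have hsmul : ContDiffAt ℝ 1
      (fun w : ℂ => (Real.sqrt (1 - ‖w‖ ^ 2))⁻¹ • w) z :=
    hinv.smul contDiffAt_id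
  exact hsmul.congr_of_eventuallyEq (Filter.Eventually.of_forall fun w => by
    simp only [Complex.real_smul, Complex.ofReal_inv]
    ring)

lemma contDiff_psiAux : ContDiff ℝ 1 PsiAux := by
  rw [contDiff_iff_contDiffAt]
  intro z
  have hpos : (0:ℝ) < 1 + ‖z‖ ^ 2 := by positivity
  have habs : ∀ w : ℂ, ‖w‖ ^ 2 = ‖w‖ ^ 2 := fun w => by
    rfl
  have hsq : ContDiffAt ℝ 1 (fun w : ℂ => 1 + ‖w‖ ^ 2) z := by
    have : ContDiffAt ℝ 1 (fun w : ℂ => (1:ℝ) + ‖w‖ ^ 2) z :=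
      contDiffAt_const.add (contDiff_norm_sq ℝ).contDiffAt
    exact this.congr_of_eventuallyEq (Filter.Eventually.of_forall fun w => by simp)
  have hsqrt : ContDiffAt ℝ 1 (fun w : ℂ => Real.sqrt (1 + ‖w‖ ^ 2)) z :=
    (Real.contDiffAt_sqrt hpos.ne').comp z hsq
  have hinv : ContDiffAt ℝ 1 (fun w : ℂ => (Real.sqrt (1 + ‖w‖ ^ 2))⁻¹) z :=
    hsqrt.inv (Real.sqrt_pos.2 hpos).ne'
  have hsmul : ContDiffAt ℝ 1
      (fun w : ℂ => (Real.sqrt (1 + ‖w‖ ^ 2))⁻¹ • w) z :=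
    hinv.smul contDiffAt_id
  exact hsmul.congr_of_eventuallyEq (Filter.Eventually.of_forall fun w => by
    simp only [PsiAux, Complex.real_smul, Complex.ofReal_inv]
    ring)

/-- Over a two-dimensional base `Ω = B_δ(0) ⊂ ℝ² ≅ ℂ`, for any finite family of `C¹`
disc-valued functions `φ_1, …, φ_d`, all sufficiently small linear-combination
perturbations produce a vanishing coefficient: there is `ε > 0` such that for every
`l ∈ ℂ^d` with all `|l i| < ε` there is `ω ∈ Ω` with `Φ(ω) + Σ_i Φ(l i · φ_i(ω)) = 0`.
Hence no finite-dimensional subspace is a probe for stability when `dim Ω = 2`. -/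
theorem no_probe_two_dimensional_base
    (δ : ℝ) (hδ0 : 0 < δ) (hδ1 : δ < 1)
    (Φ : ℂ → ℂ) (hΦ : ∀ z, Φ z = z / (Real.sqrt (1 - ‖z‖ ^ 2) : ℂ))
    (d : ℕ) (hd : 1 ≤ d)
    (φ : Fin d → ℂ → ℂ)
    (hφC1 : ∀ i, ContDiffOn ℝ 1 (φ i) (ball (0 : ℂ) δ))
    (hφdisc : ∀ i, ∀ ω ∈ ball (0 : ℂ) δ, ‖φ i ω‖ < 1) :
    ∃ ε > 0, ∀ l : Fin d → ℂ, (∀ i, ‖l i‖ < ε) →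
      ∃ ω ∈ ball (0 : ℂ) δ,
        (∀ i, ‖l i * φ i ω‖ < 1) ∧
        Φ ω + ∑ i, Φ (l i * φ i ω) = 0 := by
  -- Lipschitz constants
  obtain ⟨LΦ, hLΦ⟩ := lips_helper (by norm_num : (1/2 : ℝ) < 1) contDiffOn_phiAux
  obtain ⟨LΨ, hLΨ⟩ := lips_helper (by norm_num : (1 : ℝ) < 2) (contDiff_psiAux.contDiffOn)
  choose Lφ hLφ using fun i => lips_helper (by linarith : δ/2 < δ) (hφC1 i)
  set A : ℝ := (LΨ : ℝ) * (LΦ : ℝ) * ∑ i, (Lφ i : ℝ) with hA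
  have hA0 : 0 ≤ A := by
    apply mul_nonneg (mul_nonneg LΨ.coe_nonneg LΦ.coe_nonneg)
    exact Finset.sum_nonneg fun i _ => (Lφ i).coe_nonneg
  set ε : ℝ := min (min (1/2) (δ/(4*d))) (1/(2*(A+1))) with hε
  have hd0 : (0:ℝ) < d := by exact_mod_cast hd
  have hε0 : 0 < ε := by
    apply lt_min (lt_min (by norm_num) (by positivity)) (by positivity)
  have hεhalf : ε ≤ 1/2 := (min_le_left _ _).trans (min_le_left _ _)
  have hεδ : ε ≤ δ/(4*d) := (min_le_left _ _).trans (min_le_right _ _)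
  have hεA : ε ≤ 1/(2*(A+1)) := min_le_right _ _
  refine ⟨ε, hε0, fun l hl => ?_⟩
  set s : Set ℂ := closedBall (0:ℂ) (δ/2) with hsdef
  have hsub : s ⊆ ball (0:ℂ) δ := closedBall_subset_ball (by linarith)
  -- basic bounds
  have hterm : ∀ ω ∈ s, ∀ i, ‖l i * φ i ω‖ ≤ ε := by
    intro ω hω i
    rw [norm_mul]
    calc ‖l i‖ * ‖φ i ω‖
        ≤ ε * 1 := mul_le_mul (hl i).le (hφdisc i ω (hsub hω)).le
          (norm_nonneg _) hε0.le
      _ = ε := mul_one ε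
  have htermhalf : ∀ ω ∈ s, ∀ i, ‖l i * φ i ω‖ ≤ 1/2 := fun ω hω i =>
    (hterm ω hω i).trans hεhalf
  -- the map G
  set Φf : ℂ → ℂ := fun z => z / (Real.sqrt (1 - ‖z‖ ^ 2) : ℂ) with hΦf
  set G : ℂ → ℂ := fun ω => PsiAux (-(∑ i, Φf (l i * φ i ω))) with hG
  have hsum_bound : ∀ ω ∈ s, ‖∑ i, Φf (l i * φ i ω)‖ ≤ δ/2 := by
    intro ω hω
    calc ‖∑ i, Φf (l i * φ i ω)‖
        ≤ ∑ i, ‖Φf (l i * φ i ω)‖ := by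
          simpa using norm_sum_le Finset.univ fun i => Φf (l i * φ i ω)
      _ ≤ ∑ _i : Fin d, 2 * ε := by
          apply Finset.sum_le_sum
          intro i _
          calc ‖Φf (l i * φ i ω)‖
              ≤ 2 * ‖l i * φ i ω‖ := phiAux_abs_le (htermhalf ω hω i)
            _ ≤ 2 * ε := by linarith [hterm ω hω i]
      _ = d * (2 * ε) := by simp [Finset.sum_const, Finset.card_univ, mul_comm]
      _ ≤ δ/2 := by
          have : (d:ℝ) * (2 * ε) ≤ (d:ℝ) * (2 * (δ/(4*d))) := by
            apply mul_le_mul_of_nonneg_left (by linarith) hd0.le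
          calc (d:ℝ) * (2 * ε) ≤ (d:ℝ) * (2 * (δ/(4*d))) := this
            _ = δ/2 := by field_simp; ring
  have hmaps : Set.MapsTo G s s := by
    intro ω hω
    rw [hsdef, mem_closedBall_zero_iff]
    calc ‖G ω‖ = ‖PsiAux (-(∑ i, Φf (l i * φ i ω)))‖ := rfl
      _ ≤ ‖-(∑ i, Φf (l i * φ i ω))‖ := psiAux_abs_le _
      _ = ‖∑ i, Φf (l i * φ i ω)‖ := by rw [norm_neg]
      _ ≤ δ/2 := hsum_bound ω hω
  -- contraction estimate
  have hcontr : ∀ ω₁ ∈ s, ∀ ω₂ ∈ s, dist (G ω₁) (G ω₂) ≤ (1/2) * dist ω₁ ω₂ := by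
    intro ω₁ hω₁ ω₂ hω₂
    set w₁ : ℂ := -(∑ i, Φf (l i * φ i ω₁)) with hw₁
    set w₂ : ℂ := -(∑ i, Φf (l i * φ i ω₂)) with hw₂
    have hw₁mem : w₁ ∈ closedBall (0:ℂ) 1 := by
      rw [mem_closedBall_zero_iff]
      calc ‖w₁‖ = ‖∑ i, Φf (l i * φ i ω₁)‖ := by
            rw [hw₁, norm_neg]
        _ ≤ δ/2 := hsum_bound ω₁ hω₁
        _ ≤ 1 := by linarith
    have hw₂mem : w₂ ∈ closedBall (0:ℂ) 1 := by
      rw [mem_closedBall_zero_iff]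
      calc ‖w₂‖ = ‖∑ i, Φf (l i * φ i ω₂)‖ := by
            rw [hw₂, norm_neg]
        _ ≤ δ/2 := hsum_bound ω₂ hω₂
        _ ≤ 1 := by linarith
    have step1 : dist (G ω₁) (G ω₂) ≤ (LΨ : ℝ) * dist w₁ w₂ :=
      hLΨ.dist_le_mul w₁ hw₁mem w₂ hw₂mem
    have step2 : dist w₁ w₂ ≤ ∑ i, dist (Φf (l i * φ i ω₁)) (Φf (l i * φ i ω₂)) := by
      rw [hw₁, hw₂, dist_neg_neg]
      exact dist_sum_sum_le _ _ _
    have step3 : ∀ i : Fin d, dist (Φf (l i * φ i ω₁)) (Φf (l i * φ i ω₂)) ≤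
        (LΦ : ℝ) * (ε * ((Lφ i : ℝ) * dist ω₁ ω₂)) := by
      intro i
      have hmem1 : l i * φ i ω₁ ∈ closedBall (0:ℂ) (1/2) := by
        rw [mem_closedBall_zero_iff]
        exact htermhalf ω₁ hω₁ i
      have hmem2 : l i * φ i ω₂ ∈ closedBall (0:ℂ) (1/2) := by
        rw [mem_closedBall_zero_iff]
        exact htermhalf ω₂ hω₂ i
      have h1 : dist (Φf (l i * φ i ω₁)) (Φf (l i * φ i ω₂)) ≤
          (LΦ : ℝ) * dist (l i * φ i ω₁) (l i * φ i ω₂) :=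
        hLΦ.dist_le_mul _ hmem1 _ hmem2
      have h2 : dist (l i * φ i ω₁) (l i * φ i ω₂) =
          ‖l i‖ * dist (φ i ω₁) (φ i ω₂) := by
        rw [Complex.dist_eq, Complex.dist_eq, ← mul_sub, norm_mul]
      have h3 : dist (φ i ω₁) (φ i ω₂) ≤ (Lφ i : ℝ) * dist ω₁ ω₂ :=
        (hLφ i).dist_le_mul ω₁ hω₁ ω₂ hω₂
      calc dist (Φf (l i * φ i ω₁)) (Φf (l i * φ i ω₂))
          ≤ (LΦ : ℝ) * (‖l i‖ * dist (φ i ω₁) (φ i ω₂)) := by rw [← h2]; exact h1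
        _ ≤ (LΦ : ℝ) * (ε * ((Lφ i : ℝ) * dist ω₁ ω₂)) :=
            mul_le_mul_of_nonneg_left
              (mul_le_mul (hl i).le h3 dist_nonneg hε0.le) LΦ.coe_nonneg
    have step4 : dist w₁ w₂ ≤ (LΦ : ℝ) * ε * (∑ i, (Lφ i : ℝ)) * dist ω₁ ω₂ := by
      calc dist w₁ w₂ ≤ ∑ i, dist (Φf (l i * φ i ω₁)) (Φf (l i * φ i ω₂)) := step2
        _ ≤ ∑ i, (LΦ : ℝ) * (ε * ((Lφ i : ℝ) * dist ω₁ ω₂)) :=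
            Finset.sum_le_sum fun i _ => step3 i
        _ = (LΦ : ℝ) * ε * (∑ i, (Lφ i : ℝ)) * dist ω₁ ω₂ := by
            simp only [← Finset.mul_sum, ← Finset.sum_mul]
            ring
    have hεA' : ε * A ≤ 1/2 := by
      have h1 : ε * A ≤ (1/(2*(A+1))) * A :=
        mul_le_mul_of_nonneg_right hεA hA0
      have h2 : (1/(2*(A+1))) * A ≤ 1/2 := by
        rw [div_mul_eq_mul_div, div_le_div_iff₀ (by positivity) (by norm_num)]
        nlinarith
      linarith
    calc dist (G ω₁) (G ω₂) ≤ (LΨ : ℝ) * dist w₁ w₂ := step1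
      _ ≤ (LΨ : ℝ) * ((LΦ : ℝ) * ε * (∑ i, (Lφ i : ℝ)) * dist ω₁ ω₂) :=
          mul_le_mul_of_nonneg_left step4 LΨ.coe_nonneg
      _ = (ε * A) * dist ω₁ ω₂ := by rw [hA]; ring
      _ ≤ (1/2) * dist ω₁ ω₂ := mul_le_mul_of_nonneg_right hεA' dist_nonneg
  -- Banach fixed point
  have hscomplete : IsComplete s := isClosed_closedBall.isComplete
  have hcw : ContractingWith (1/2 : NNReal) (hmaps.restrict G s s) := by
    constructor
    · rw [← NNReal.coe_lt_coe]; norm_num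
    · apply LipschitzWith.of_dist_le_mul
      intro x y
      rw [Subtype.dist_eq, Subtype.dist_eq]
      have := hcontr x x.2 y y.2
      simpa using this
  have h0mem : (0:ℂ) ∈ s := by
    rw [hsdef, mem_closedBall_zero_iff]
    simp
    linarith
  obtain ⟨y, hys, hfix, -, -⟩ := ContractingWith.exists_fixedPoint' hscomplete hmaps hcw h0mem
    (edist_ne_top _ _)
  refine ⟨y, hsub hys, fun i => ?_, ?_⟩
  · calc ‖l i * φ i y‖ ≤ ε := hterm y hys i
      _ ≤ 1/2 := hεhalf
      _ < 1 := by norm_num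
  · have hΦeq : ∀ z, Φ z = Φf z := hΦ
    have hy : G y = y := hfix
    have hΦy : Φf y = -(∑ i, Φf (l i * φ i y)) := by
      conv_lhs => rw [← hy]
      exact phiAux_psiAux _
    rw [hΦeq y, hΦy]
    have : ∑ i, Φ (l i * φ i y) = ∑ i, Φf (l i * φ i y) :=
      Finset.sum_congr rfl fun i _ => hΦeq _
    rw [this]
    ring
end
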